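/- A triangle occurs in Φ(P(π)) if and only if π has an interval expressible as a direct sum p₁ ⊕ p₂ or skew sum p₁ ⊖ p₂ of two nonempty patterns; that is, Φ(P(π)) contains three vertices a < b < c pairwise joined by chords/outer edges if and only if π has intervals [a,b-1], [b,c-1], and [a,c-1]. Consequently, π is block-wise simple if and only if Φ(P(π)) contains no triangle face. -/

import Mathlib

/-- A set of values in `Fin n` is consecutive if it is closed under betweenness. -/
def Consec {n : ℕ} (S : Finset (Fin n)) : Prop :=
  ∀ ⦃x y z : Fin n⦄, x ∈ S → z ∈ S → x ≤ y → y ≤ z → y ∈ S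

/-- `I` is an interval of the permutation `π` if both `I` and its preimage under `π`
are sets of consecutive integers. -/
def IsInterval {n : ℕ} (π : Equiv.Perm (Fin n)) (I : Finset (Fin n)) : Prop :=
  Consec I ∧ Consec (I.image π.symm)

/-- The 1-based integer interval `[a,b]` viewed inside `Fin n`
(the element `x : Fin n` represents the value `x.val + 1`). -/
def ivl (n a b : ℕ) : Finset (Fin n) :=
  Finset.univ.filter (fun x => a ≤ x.val + 1 ∧ x.val + 1 ≤ b)

/-- Outer edge of the convex m-gon with vertices 1,...,m. -/
def OuterEdge (m : ℕ) (p : ℕ × ℕ) : Prop :=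
  (1 ≤ p.1 ∧ p.2 = p.1 + 1 ∧ p.2 ≤ m) ∨ (p.1 = 1 ∧ p.2 = m)

/-- A (non-degenerate) diagonal of the convex m-gon with vertices 1,...,m. -/
def IsDiag (m : ℕ) (p : ℕ × ℕ) : Prop :=
  1 ≤ p.1 ∧ p.1 + 1 < p.2 ∧ p.2 ≤ m ∧ ¬ (p.1 = 1 ∧ p.2 = m)

/-- A dissection of the convex m-gon: a set of diagonals. -/
def Dissection (m : ℕ) (D : Set (ℕ × ℕ)) : Prop :=
  ∀ p ∈ D, IsDiag m p

/-- Two chords of a convex polygon cross iff their endpoints interleave. -/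
def Cross (p q : ℕ × ℕ) : Prop :=
  (p.1 < q.1 ∧ q.1 < p.2 ∧ p.2 < q.2) ∨ (q.1 < p.1 ∧ p.1 < q.2 ∧ q.2 < p.2)

/-- A chord is an edge of the graph of the dissection: a diagonal of D or an outer edge. -/
def EdgeOf (m : ℕ) (D : Set (ℕ × ℕ)) (p : ℕ × ℕ) : Prop :=
  p ∈ D ∨ OuterEdge m p

/-- Vertices u and v are joined by an edge of the graph of the dissection. -/
def EdgeBtw (m : ℕ) (D : Set (ℕ × ℕ)) (u v : ℕ) : Prop :=
  EdgeOf m D (min u v, max u v)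

/-- A dissection is diagonally framed if the four sides of every pair of crossing
diagonals are edges of the graph of the dissection. -/
def DiagFramed (m : ℕ) (D : Set (ℕ × ℕ)) : Prop :=
  ∀ a b c d : ℕ, a < b → b < c → c < d → (a, c) ∈ D → (b, d) ∈ D →
    EdgeOf m D (a, b) ∧ EdgeOf m D (b, c) ∧ EdgeOf m D (c, d) ∧ EdgeOf m D (a, d)

/-- The interval poset of π encoded by endpoint pairs: (a,b) with 1 ≤ a ≤ b ≤ n such
that [a,b] is an interval of π. -/
def PosetPairs (n : ℕ) (π : Equiv.Perm (Fin n)) : Set (ℕ × ℕ) :=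
  {p | 1 ≤ p.1 ∧ p.1 ≤ p.2 ∧ p.2 ≤ n ∧ IsInterval π (ivl n p.1 p.2)}

/-- The set of interval posets (so encoded) with n minimal elements. -/
def IntervalPosets (n : ℕ) : Set (Set (ℕ × ℕ)) :=
  {P | ∃ π : Equiv.Perm (Fin n), P = PosetPairs n π}

/-- Φ sends each non-minimal (non-singleton) and non-maximal element [a,b] of the
poset to the diagonal (a, b+1) of the convex (n+1)-gon. -/
def Phi (n : ℕ) (P : Set (ℕ × ℕ)) : Set (ℕ × ℕ) :=
  {q | ∃ a b : ℕ, (a, b) ∈ P ∧ a < b ∧ ¬ (a = 1 ∧ b = n) ∧ q = (a, b + 1)}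

/-- No diagonal of D passes through the interior of the quadrilateral a < b < c < d. -/
def NoDiagInsideQuad (D : Set (ℕ × ℕ)) (a b c d : ℕ) : Prop :=
  ¬ ∃ p ∈ D, Cross p (a, b) ∨ Cross p (b, c) ∨ Cross p (c, d) ∨ Cross p (a, d) ∨
      p = (a, c) ∨ p = (b, d)

/-- The dissection D of the convex m-gon has a quadrilateral face. -/
def HasQuadFace (m : ℕ) (D : Set (ℕ × ℕ)) : Prop :=
  ∃ a b c d : ℕ, 1 ≤ a ∧ a < b ∧ b < c ∧ c < d ∧ d ≤ m ∧
    EdgeOf m D (a, b) ∧ EdgeOf m D (b, c) ∧ EdgeOf m D (c, d) ∧ EdgeOf m D (a, d) ∧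
    NoDiagInsideQuad D a b c d

/-- The chord (a,b) is a chord of the dissection Φ(P(π)) or an outer edge of the
convex (n+1)-gon. -/
def ChordOrOuter (n : ℕ) (π : Equiv.Perm (Fin n)) (a b : ℕ) : Prop :=
  (a, b) ∈ Phi n (PosetPairs n π) ∨ OuterEdge (n + 1) (a, b)

/-- π is block-wise simple: no interval of π is the disjoint union of two nonempty
intervals of π. -/
def BlockwiseSimple {n : ℕ} (π : Equiv.Perm (Fin n)) : Prop :=
  ¬ ∃ I K : Finset (Fin n), IsInterval π I ∧ IsInterval π K ∧ IsInterval π (K \ I) ∧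
    I.Nonempty ∧ (K \ I).Nonempty ∧ I ⊂ K


section AuxTriangle

variable {n : ℕ}

lemma mem_ivl {n a b : ℕ} {x : Fin n} : x ∈ ivl n a b ↔ a ≤ x.val + 1 ∧ x.val + 1 ≤ b := by
  simp [ivl]

lemma consec_of_sub {n : ℕ} {S : Finset (Fin n)} (h : ∀ x ∈ S, ∀ z ∈ S, x = z) : Consec S := by
  intro x y z hx hz hxy hyz
  have h1 := h x hx z hz
  subst h1
  have : x = y := le_antisymm hxy hyz
  rwa [← this]

lemma consec_of_all {n : ℕ} {S : Finset (Fin n)} (h : ∀ x, x ∈ S) : Consec S :=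
  fun _ y _ _ _ _ _ => h y

lemma isInterval_singleton {n : ℕ} (π : Equiv.Perm (Fin n)) (a : ℕ) :
    IsInterval π (ivl n a a) := by
  constructor
  · apply consec_of_sub
    intro x hx z hz
    rw [mem_ivl] at hx hz
    exact Fin.ext (by omega)
  · apply consec_of_sub
    intro x hx z hz
    obtain ⟨u, hu, rfl⟩ := Finset.mem_image.mp hx
    obtain ⟨v, hv, rfl⟩ := Finset.mem_image.mp hz
    rw [mem_ivl] at hu hv
    have : u = v := Fin.ext (by omega)
    rw [this]

lemma isInterval_full {n : ℕ} (π : Equiv.Perm (Fin n)) :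
    IsInterval π (ivl n 1 n) := by
  constructor
  · apply consec_of_all
    intro x
    rw [mem_ivl]
    have := x.isLt
    omega
  · apply consec_of_all
    intro y
    rw [Finset.mem_image]
    refine ⟨π y, ?_, π.symm_apply_apply y⟩
    rw [mem_ivl]
    have := (π y).isLt
    omega

lemma consec_eq_ivl {n : ℕ} {S : Finset (Fin n)} (hS : S.Nonempty) (hc : Consec S) :
    S = ivl n ((S.min' hS).val + 1) ((S.max' hS).val + 1) := by
  ext x
  rw [mem_ivl]
  constructor
  · intro hx
    have h1 := S.min'_le x hx
    have h2 := S.le_max' x hx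
    rw [Fin.le_def] at h1 h2
    omega
  · rintro ⟨h1, h2⟩
    exact hc (S.min'_mem hS) (S.max'_mem hS) (by rw [Fin.le_def]; omega) (by rw [Fin.le_def]; omega)

lemma chord_iff {n : ℕ} (π : Equiv.Perm (Fin n)) {a b : ℕ} (ha : 1 ≤ a) (hab : a < b)
    (hb : b ≤ n + 1) : ChordOrOuter n π a b ↔ IsInterval π (ivl n a (b - 1)) := by
  constructor
  · rintro (⟨a', b', ⟨_, _, _, hI⟩, _, _, heq⟩ | h)
    · simp only [Prod.mk.injEq] at heq
      obtain ⟨rfl, rfl⟩ := heq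
      simpa using hI
    · rcases h with ⟨_, h2, _⟩ | ⟨h1, h2⟩
      · simp only at h2
        have : b - 1 = a := by omega
        rw [this]
        exact isInterval_singleton π a
      · simp only at h1 h2
        subst h1
        have : b - 1 = n := by omega
        rw [this]
        exact isInterval_full π
  · intro hI
    by_cases h1 : b = a + 1
    · exact Or.inr (Or.inl ⟨ha, h1, by omega⟩)
    by_cases h2 : a = 1 ∧ b = n + 1
    · exact Or.inr (Or.inr ⟨h2.1, by omega⟩)
    · left
      have h2' : ¬(a = 1 ∧ b - 1 = n) := by
        rintro ⟨h3, h4⟩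
        exact h2 ⟨h3, by omega⟩
      have h3 : ((a : ℕ), (b : ℕ)) = (a, b - 1 + 1) := by
        rw [Nat.sub_add_cancel (by omega : 1 ≤ b)]
      exact ⟨a, b - 1, ⟨ha, by omega, by omega, hI⟩, by omega, h2', h3⟩

lemma split_lemma {n : ℕ} {π : Equiv.Perm (Fin n)} {A B K : Finset (Fin n)}
    (hA : IsInterval π A) (hB : IsInterval π B) (hK : IsInterval π K)
    (hAne : A.Nonempty) (hBne : B.Nonempty)
    (hU : A ∪ B = K) (hlt : (A.max' hAne).val < (B.min' hBne).val) :
    ∃ a b c : ℕ, 1 ≤ a ∧ a < b ∧ b < c ∧ c ≤ n + 1 ∧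
      IsInterval π (ivl n a (b - 1)) ∧ IsInterval π (ivl n b (c - 1)) ∧
      IsInterval π (ivl n a (c - 1)) := by
  have hKne : K.Nonempty := hU ▸ (Finset.Nonempty.mono Finset.subset_union_left hAne)
  have hAK : A ⊆ K := hU ▸ Finset.subset_union_left
  have hBK : B ⊆ K := hU ▸ Finset.subset_union_right
  set mA := A.min' hAne with hmA
  set MA := A.max' hAne with hMA
  set mB := B.min' hBne with hmB
  set MB := B.max' hBne with hMB
  have hwlt : MA.val + 1 < n := lt_of_le_of_lt (by omega) mB.isLt
  set w : Fin n := ⟨MA.val + 1, hwlt⟩ with hw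
  have hwK : w ∈ K := by
    refine hK.1 (hAK (A.max'_mem hAne)) (hBK (B.max'_mem hBne)) ?_ ?_
    · rw [Fin.le_def]; simp [hw]; exact Nat.le_succ _
    · rw [Fin.le_def]
      have := B.min'_le _ (B.max'_mem hBne)
      rw [Fin.le_def] at this
      simp only [hw]
      omega
  have hwB : w ∈ B := by
    rcases Finset.mem_union.mp (hU ▸ hwK) with h | h
    · exact absurd (A.le_max' w h) (by rw [Fin.le_def]; simp [hw]; exact le_rfl)
    · exact h
  have hadj : mB.val = MA.val + 1 := by
    have := B.min'_le w hwB
    rw [Fin.le_def] at this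
    simp only [hw] at this
    omega
  have hmK : (K.min' hKne).val = mA.val := by
    have h1 := K.min'_le mA (hAK (A.min'_mem hAne))
    have h2 : K.min' hKne ∈ A ∨ K.min' hKne ∈ B := Finset.mem_union.mp (hU ▸ K.min'_mem hKne)
    rw [Fin.le_def] at h1
    rcases h2 with h | h
    · have := A.min'_le _ h
      rw [Fin.le_def] at this
      omega
    · have := B.min'_le _ h
      have h3 := A.le_max' mA (A.min'_mem hAne)
      rw [Fin.le_def] at this h3
      omega
  have hMK : (K.max' hKne).val = MB.val := by
    have h1 := K.le_max' MB (hBK (B.max'_mem hBne))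
    have h2 : K.max' hKne ∈ A ∨ K.max' hKne ∈ B := Finset.mem_union.mp (hU ▸ K.max'_mem hKne)
    rw [Fin.le_def] at h1
    rcases h2 with h | h
    · have := A.le_max' _ h
      have h3 := B.min'_le MB (B.max'_mem hBne)
      rw [Fin.le_def] at this h3
      omega
    · have := B.le_max' _ h
      rw [Fin.le_def] at this
      omega
  have hMAmA := A.le_max' mA (A.min'_mem hAne)
  have hMBmB := B.le_max' mB (B.min'_mem hBne)
  rw [Fin.le_def] at hMAmA hMBmB
  refine ⟨mA.val + 1, mB.val + 1, MB.val + 2, by omega, by omega, by omega,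
    by have := MB.isLt; omega, ?_, ?_, ?_⟩
  · have : mB.val + 1 - 1 = MA.val + 1 := by omega
    rw [this, ← consec_eq_ivl hAne hA.1]
    exact hA
  · have : MB.val + 2 - 1 = MB.val + 1 := by omega
    rw [this, ← consec_eq_ivl hBne hB.1]
    exact hB
  · have : MB.val + 2 - 1 = MB.val + 1 := by omega
    rw [this]
    have e := consec_eq_ivl hKne hK.1
    rw [hmK, hMK] at e
    rw [← e]
    exact hK

lemma exists_block_iff {n : ℕ} (π : Equiv.Perm (Fin n)) :
    (∃ I K : Finset (Fin n), IsInterval π I ∧ IsInterval π K ∧ IsInterval π (K \ I) ∧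
      I.Nonempty ∧ (K \ I).Nonempty ∧ I ⊂ K) ↔
    (∃ a b c : ℕ, 1 ≤ a ∧ a < b ∧ b < c ∧ c ≤ n + 1 ∧
      IsInterval π (ivl n a (b - 1)) ∧ IsInterval π (ivl n b (c - 1)) ∧
      IsInterval π (ivl n a (c - 1))) := by
  constructor
  · rintro ⟨I, K, hI, hK, hJ, hIne, hJne, hIK⟩
    set J := K \ I with hJdef
    have hd : Disjoint J I := Finset.sdiff_disjoint
    have hUIJ : I ∪ J = K := Finset.union_sdiff_of_subset hIK.subset
    have hUJI : J ∪ I = K := Finset.sdiff_union_of_subset hIK.subset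
    have hcase : (I.max' hIne).val < (J.min' hJne).val ∨
        (J.max' hJne).val < (I.min' hIne).val := by
      by_contra h
      push_neg at h
      obtain ⟨h1, h2⟩ := h
      by_cases h3 : (I.min' hIne).val ≤ (J.min' hJne).val
      · have : J.min' hJne ∈ I := by
          refine hI.1 (I.min'_mem hIne) (I.max'_mem hIne) ?_ ?_ <;> rw [Fin.le_def] <;> omega
        exact (Finset.disjoint_left.mp hd (J.min'_mem hJne)) this
      · push_neg at h3
        have : I.min' hIne ∈ J := by
          refine hJ.1 (J.min'_mem hJne) (J.max'_mem hJne) ?_ ?_ <;> rw [Fin.le_def] <;> omega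
        exact (Finset.disjoint_left.mp hd this) (I.min'_mem hIne)
    rcases hcase with h | h
    · exact split_lemma hI hJ hK hIne hJne hUIJ h
    · exact split_lemma hJ hI hK hJne hIne hUJI h
  · rintro ⟨a, b, c, ha, hab, hbc, hc, i1, i2, i3⟩
    refine ⟨ivl n a (b - 1), ivl n a (c - 1), i1, i3, ?_, ?_, ?_, ?_⟩
    · have he : ivl n a (c - 1) \ ivl n a (b - 1) = ivl n b (c - 1) := by
        ext x
        rw [Finset.mem_sdiff, mem_ivl, mem_ivl, mem_ivl]
        omega
      rw [he]
      exact i2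
    · exact ⟨⟨a - 1, by omega⟩, by rw [mem_ivl]; simp; omega⟩
    · have he : ivl n a (c - 1) \ ivl n a (b - 1) = ivl n b (c - 1) := by
        ext x
        rw [Finset.mem_sdiff, mem_ivl, mem_ivl, mem_ivl]
        omega
      rw [he]
      exact ⟨⟨b - 1, by omega⟩, by rw [mem_ivl]; simp; omega⟩
    · rw [Finset.ssubset_def]
      constructor
      · intro x hx
        rw [mem_ivl] at hx ⊢
        omega
      · intro hsub
        have hx : (⟨b - 1, by omega⟩ : Fin n) ∈ ivl n a (c - 1) := by
          rw [mem_ivl]; simp; omega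
        have := hsub hx
        rw [mem_ivl] at this
        simp at this

end AuxTriangle

/-- three vertices a < b < c of the convex (n+1)-gon are pairwise joined
by chords of Φ(P(π)) or outer edges iff [a,b-1], [b,c-1] and [a,c-1] are intervals of
π; consequently π is block-wise simple iff Φ(P(π)) contains no triangle. -/
theorem triangle_iff_sum_interval (n : ℕ) (π : Equiv.Perm (Fin n)) :
    (∀ a b c : ℕ, 1 ≤ a → a < b → b < c → c ≤ n + 1 →
      ((ChordOrOuter n π a b ∧ ChordOrOuter n π b c ∧ ChordOrOuter n π a c) ↔
        (IsInterval π (ivl n a (b - 1)) ∧ IsInterval π (ivl n b (c - 1)) ∧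
          IsInterval π (ivl n a (c - 1))))) ∧
    (BlockwiseSimple π ↔
      ¬ ∃ a b c : ℕ, 1 ≤ a ∧ a < b ∧ b < c ∧ c ≤ n + 1 ∧
        ChordOrOuter n π a b ∧ ChordOrOuter n π b c ∧ ChordOrOuter n π a c) := by
  have key : ∀ a b c : ℕ, 1 ≤ a → a < b → b < c → c ≤ n + 1 →
      ((ChordOrOuter n π a b ∧ ChordOrOuter n π b c ∧ ChordOrOuter n π a c) ↔
        (IsInterval π (ivl n a (b - 1)) ∧ IsInterval π (ivl n b (c - 1)) ∧
          IsInterval π (ivl n a (c - 1)))) := by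
    intro a b c ha hab hbc hc
    exact and_congr (chord_iff π ha hab (by omega))
      (and_congr (chord_iff π (by omega) hbc hc) (chord_iff π ha (by omega) hc))
  refine ⟨key, ?_⟩
  unfold BlockwiseSimple
  apply not_congr
  rw [exists_block_iff]
  constructor
  · rintro ⟨a, b, c, h1, h2, h3, h4, i1, i2, i3⟩
    obtain ⟨c1, c2, c3⟩ := (key a b c h1 h2 h3 h4).mpr ⟨i1, i2, i3⟩
    exact ⟨a, b, c, h1, h2, h3, h4, c1, c2, c3⟩
  · rintro ⟨a, b, c, h1, h2, h3, h4, c1, c2, c3⟩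
    obtain ⟨i1, i2, i3⟩ := (key a b c h1 h2 h3 h4).mp ⟨c1, c2, c3⟩
    exact ⟨a, b, c, h1, h2, h3, h4, i1, i2, i3⟩
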